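/- The full subcategory of positive cyclic operads is reflective in the category of cyclic operads: the functor G sending a cyclic operad P to the positive cyclic operad GP with the same colors, GP(c₀,…,c_n) = P(c₀,…,c_n) for n ≥ 0 and GP() = *, is left adjoint to the inclusion I : Cyc^↑ → Cyc. -/

import Mathlib

open CategoryTheory MonoidalCategory

universe w v u

/-- The profile `c̄ σ = c_{σ(0)}, …, c_{σ(n)}` obtained by permuting a profile (a list). -/
def permuteList {C : Type u} (c : List C) {n : ℕ} (h : c.length = n)
    (σ : Equiv.Perm (Fin n)) : List C :=
  List.ofFn fun k => c.get (Fin.cast h.symm (σ k))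

/-- The composite profile `c̄ ∘_i^j d̄ = c_0,…,c_{i-1}, d_{j+1},…,d_m, d_0,…,d_{j-1},
c_{i+1},…,c_n`. -/
def profComp {C : Type u} (c d : List C) (i j : ℕ) : List C :=
  c.take i ++ (d.drop (j + 1) ++ (d.take j ++ c.drop (i + 1)))

/-- The helper function `α_{i,m}` : identity on `[0,i-1]`, `x ↦ x - 1 + m` on `[i+1,n]`. -/
def alphaN (i m x : ℕ) : ℕ := if x < i then x else x + m - 1

/-- The helper function `β_{j,i}` : `x ↦ x + m - j + i` on `[0,j-1]`, `x ↦ x - j - 1 + i`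
on `[j+1,m]`. -/
def betaN (m j i x : ℕ) : ℕ := if x < j then x + m + i - j else x + i - j - 1

/-- The underlying data of a (colored) cyclic operad in a monoidal category `V`, *without*
identity elements: an involutive color set, objects `P(c_0,…,c_n)` of `V` indexed by
profiles, a right action of `Σ_n^+ = Aut([0,n])`, and composition operations `∘_i^j`
defined when `c_i = d_j^†`. -/
structure VCycDataNU (C : Type u) (V : Type v) [Category.{w} V] [MonoidalCategory V] where
  dag : C → C
  dag_invol : Function.Involutive dag
  P : List C → V
  act : ∀ {c : List C} {n : ℕ} (h : c.length = n) (σ : Equiv.Perm (Fin n)),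
    P c ⟶ P (permuteList c h σ)
  comp : ∀ {c d : List C} (i j : ℕ) (hi : i < c.length) (hj : j < d.length),
    c.get ⟨i, hi⟩ = dag (d.get ⟨j, hj⟩) → (P c ⊗ P d ⟶ P (profComp c d i j))

/-- The underlying data of a (colored) cyclic operad in `V`: the non-unital data together
with identity elements `id_c : 𝟙_V → P(c^†, c)`. -/
structure VCycData (C : Type u) (V : Type v) [Category.{w} V] [MonoidalCategory V] extends
    VCycDataNU C V where
  ident : ∀ c : C, (𝟙_ V ⟶ P [dag c, c])

variable {C : Type u} {V : Type v} [Category.{w} V] [MonoidalCategory V] [SymmetricCategory V]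

/-- Axioms (C.1), (C.2), (C.3) of a cyclic operad (together with functoriality of the
symmetric group actions): a *non-unital Markl cyclic operad*. -/
structure IsVMarkl (D : VCycDataNU C V) : Prop where
  act_one : ∀ {c : List C} {n : ℕ} (h : c.length = n) (hl : permuteList c h 1 = c),
    D.act h 1 = eqToHom (congrArg D.P hl.symm)
  act_mul : ∀ {c : List C} {n : ℕ} (h : c.length = n) (σ σ' : Equiv.Perm (Fin n))
    (h2 : (permuteList c h σ).length = n)
    (hl : permuteList (permuteList c h σ) h2 σ' = permuteList c h (σ * σ')),
    D.act h σ ≫ D.act h2 σ' = D.act h (σ * σ') ≫ eqToHom (congrArg D.P hl.symm)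
  /- (C.1): `(τ^{m-j+i})^* (x ∘_i^j y) = y ∘_j^i x`. -/
  swap : ∀ {c d : List C} (i j : ℕ) (hi : i < c.length) (hj : j < d.length)
    (hcd : c.get ⟨i, hi⟩ = D.dag (d.get ⟨j, hj⟩))
    (hdc : d.get ⟨j, hj⟩ = D.dag (c.get ⟨i, hi⟩))
    (hlen : (profComp c d i j).length = c.length + d.length - 2)
    (hl : permuteList (profComp c d i j) hlen
        ((finRotate (c.length + d.length - 2)) ^ (d.length - 1 - j + i)) = profComp d c j i),
    D.comp i j hi hj hcd ≫
        D.act hlen ((finRotate (c.length + d.length - 2)) ^ (d.length - 1 - j + i)) ≫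
        eqToHom (congrArg D.P hl)
      = (β_ (D.P c) (D.P d)).hom ≫ D.comp j i hj hi hdc
  /- (C.2): `(x ∘_i^j y) ∘_{β_{j,i}(k)}^{l} z = x ∘_i^{α_{k,p}(j)} (y ∘_k^l z)` for `k ≠ j`,
  whenever the indicated compositions are defined. -/
  assoc : ∀ {c d e : List C} (i j k l : ℕ) (hi : i < c.length) (hj : j < d.length)
    (hk : k < d.length) (hl : l < e.length) (_ : k ≠ j)
    (h1 : c.get ⟨i, hi⟩ = D.dag (d.get ⟨j, hj⟩))
    (h2 : d.get ⟨k, hk⟩ = D.dag (e.get ⟨l, hl⟩))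
    (hb : betaN (d.length - 1) j i k < (profComp c d i j).length)
    (hcol1 : (profComp c d i j).get ⟨betaN (d.length - 1) j i k, hb⟩ = D.dag (e.get ⟨l, hl⟩))
    (ha : alphaN k (e.length - 1) j < (profComp d e k l).length)
    (hcol2 : c.get ⟨i, hi⟩ = D.dag ((profComp d e k l).get ⟨alphaN k (e.length - 1) j, ha⟩))
    (hlist : profComp c (profComp d e k l) i (alphaN k (e.length - 1) j)
      = profComp (profComp c d i j) e (betaN (d.length - 1) j i k) l),
    (D.comp i j hi hj h1 ▷ D.P e) ≫ D.comp (betaN (d.length - 1) j i k) l hb hl hcol1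
      = (α_ (D.P c) (D.P d) (D.P e)).hom ≫ (D.P c ◁ D.comp k l hk hl h2) ≫
          D.comp i (alphaN k (e.length - 1) j) hi ha hcol2 ≫ eqToHom (congrArg D.P hlist)
  /- (C.3): `(σ₁^* x) ∘_i^j (σ₂^* y) = σ^* (x ∘_{σ₁(i)}^{σ₂(j)} y)` where `σ` is determined
  by `σ ∘ (α_{i,m} ⊔ β_{j,i}) = (α_{σ₁(i),m} ⊔ β_{σ₂(j),σ₁(i)}) ∘ (σ₁ ⊔ σ₂)`. -/
  equiv : ∀ {c d : List C} {nc nd : ℕ} (h1 : c.length = nc) (h2 : d.length = nd)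
    (σ₁ : Equiv.Perm (Fin nc)) (σ₂ : Equiv.Perm (Fin nd)) (i : Fin nc) (j : Fin nd)
    (σ : Equiv.Perm (Fin (nc + nd - 2)))
    (_ : ∀ (x : Fin nc), x ≠ i → ∀ (hax : alphaN i.val (nd - 1) x.val < nc + nd - 2),
      (σ ⟨alphaN i.val (nd - 1) x.val, hax⟩).val = alphaN (σ₁ i).val (nd - 1) (σ₁ x).val)
    (_ : ∀ (x : Fin nd), x ≠ j → ∀ (hbx : betaN (nd - 1) j.val i.val x.val < nc + nd - 2),
      (σ ⟨betaN (nd - 1) j.val i.val x.val, hbx⟩).val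
        = betaN (nd - 1) (σ₂ j).val (σ₁ i).val (σ₂ x).val)
    (hip : i.val < (permuteList c h1 σ₁).length) (hjp : j.val < (permuteList d h2 σ₂).length)
    (hcolp : (permuteList c h1 σ₁).get ⟨i.val, hip⟩
      = D.dag ((permuteList d h2 σ₂).get ⟨j.val, hjp⟩))
    (hi0 : (σ₁ i).val < c.length) (hj0 : (σ₂ j).val < d.length)
    (hcol0 : c.get ⟨(σ₁ i).val, hi0⟩ = D.dag (d.get ⟨(σ₂ j).val, hj0⟩))
    (hlen : (profComp c d (σ₁ i).val (σ₂ j).val).length = nc + nd - 2)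
    (hlist : permuteList (profComp c d (σ₁ i).val (σ₂ j).val) hlen σ
      = profComp (permuteList c h1 σ₁) (permuteList d h2 σ₂) i.val j.val),
    (D.act h1 σ₁ ⊗ₘ D.act h2 σ₂) ≫ D.comp i.val j.val hip hjp hcolp
      = D.comp (σ₁ i).val (σ₂ j).val hi0 hj0 hcol0 ≫ D.act hlen σ ≫
          eqToHom (congrArg D.P hlist)

/-- The axioms (C.1)–(C.4) of a (colored) cyclic operad in `V`. -/
structure IsVCyc (D : VCycData C V) : Prop where
  markl : IsVMarkl D.toVCycDataNU
  /- (C.4), first half: `x ∘_i^1 id_c = x`. -/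
  unit : ∀ {c : List C} (i : ℕ) (hi : i < c.length) (cc : C)
    (h2 : 1 < ([D.dag cc, cc] : List C).length)
    (hcol : c.get ⟨i, hi⟩ = D.dag (([D.dag cc, cc] : List C).get ⟨1, h2⟩))
    (hlist : c = profComp c [D.dag cc, cc] i 1),
    (ρ_ (D.P c)).inv ≫ (D.P c ◁ D.ident cc) ≫ D.comp i 1 hi h2 hcol
      = eqToHom (congrArg D.P hlist)
  /- (C.4), second half: `τ^* id_c = id_{c^†}`. -/
  tau_ident : ∀ (cc : C) (h : ([D.dag cc, cc] : List C).length = 2)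
    (hl : permuteList [D.dag cc, cc] h (finRotate 2) = [D.dag (D.dag cc), D.dag cc]),
    D.ident cc ≫ D.act h (finRotate 2) = D.ident (D.dag cc) ≫ eqToHom (congrArg D.P hl.symm)

section Positive

open Limits

variable {V : Type v} [Category.{w} V] [MonoidalCategory V] [SymmetricCategory V]
  [HasTerminal V]

/-- The underlying collection of the positive reflection `GP`: same operation objects in
nonempty profiles, and the terminal object in the empty profile. -/
noncomputable def GP {C : Type u} (D : VCycData C V) : List C → V := fun l =>
  if l.length = 0 then ⊤_ V else D.P l

/-- The positive reflection `G P` of a cyclic operad `P`: same colors,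
`GP(c₀,…,c_n) = P(c₀,…,c_n)` for `n ≥ 0`, and `GP() = *` terminal; all data except the
compositions into the empty profile (which are uniquely determined by terminality) are
induced from `P`. -/
noncomputable def GData {C : Type u} (D : VCycData C V) : VCycData C V where
  dag := D.dag
  dag_invol := D.dag_invol
  P := GP D
  act := fun {c n} h σ => by
    by_cases hc : c.length = 0
    · exact terminal.from _ ≫ eqToHom (if_pos (by simp [permuteList]; omega)).symm
    · exact eqToHom (if_neg hc) ≫ D.act h σ ≫
        eqToHom (if_neg (by simp [permuteList]; omega)).symm
  comp := fun {c d} i j hi hj hcol => by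
    by_cases hres : (profComp c d i j).length = 0
    · exact terminal.from _ ≫ eqToHom (if_pos hres).symm
    · exact (eqToHom (if_neg (by omega)) ⊗ₘ eqToHom (if_neg (by omega))) ≫
        D.comp i j hi hj hcol ≫ eqToHom (if_neg hres).symm
  ident := fun cc => D.ident cc ≫
    eqToHom (show D.P [D.dag cc, cc] = GP D [D.dag cc, cc] from (if_neg (by simp)).symm)

/-- A cyclic operad is *positive* if its value on the empty profile is terminal. -/
def IsPositive {C : Type u} (D : VCycData C V) : Prop :=
  Nonempty (IsTerminal (D.P ([] : List C)))

end Positive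

/-- A morphism of (the underlying data of) cyclic operads in `V`: an involutive map of
colors together with maps of the operation objects, compatible with the symmetric group
actions, identities, and compositions. -/
structure VCycHom {C C' : Type u} {V : Type v} [Category.{w} V] [MonoidalCategory V]
    (D : VCycData C V) (E : VCycData C' V) where
  cf : C → C'
  cf_dag : ∀ c, cf (D.dag c) = E.dag (cf c)
  f : ∀ l : List C, D.P l ⟶ E.P (l.map cf)
  compat_act : ∀ (l : List C) (n : ℕ) (h : l.length = n) (h' : (l.map cf).length = n)
    (σ : Equiv.Perm (Fin n))
    (hl : permuteList (l.map cf) h' σ = (permuteList l h σ).map cf),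
    D.act h σ ≫ f (permuteList l h σ)
      = f l ≫ E.act h' σ ≫ eqToHom (congrArg E.P hl)
  compat_ident : ∀ (c : C) (hl : [E.dag (cf c), cf c] = ([D.dag c, c] : List C).map cf),
    D.ident c ≫ f [D.dag c, c] = E.ident (cf c) ≫ eqToHom (congrArg E.P hl)
  compat_comp : ∀ {c d : List C} (i j : ℕ) (hi : i < c.length) (hj : j < d.length)
    (hcol : c.get ⟨i, hi⟩ = D.dag (d.get ⟨j, hj⟩))
    (hi' : i < (c.map cf).length) (hj' : j < (d.map cf).length)
    (hcol' : (c.map cf).get ⟨i, hi'⟩ = E.dag ((d.map cf).get ⟨j, hj'⟩))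
    (hl : profComp (c.map cf) (d.map cf) i j = (profComp c d i j).map cf),
    D.comp i j hi hj hcol ≫ f (profComp c d i j)
      = (f c ⊗ₘ f d) ≫ E.comp i j hi' hj' hcol' ≫ eqToHom (congrArg E.P hl)

/-- `g ∘ η = k` for morphisms of cyclic operads, expressed componentwise. -/
def CompEq {C C' C'' : Type u} {V : Type v} [Category.{w} V] [MonoidalCategory V]
    {A : VCycData C V} {B : VCycData C' V} {Z : VCycData C'' V}
    (g : VCycHom B Z) (η : VCycHom A B) (k : VCycHom A Z) : Prop :=
  (∀ x, g.cf (η.cf x) = k.cf x) ∧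
  ∀ (l : List C) (hl : (l.map η.cf).map g.cf = l.map k.cf),
    η.f l ≫ g.f (l.map η.cf) ≫ eqToHom (congrArg Z.P hl) = k.f l

attribute [reducible] GP GData

section GChar
open CategoryTheory MonoidalCategory Limits

variable {C : Type u} {V : Type v} [Category.{w} V] [MonoidalCategory V] [SymmetricCategory V]
  [Limits.HasTerminal V]

lemma permuteList_length {C : Type u} (c : List C) {n} (h : c.length = n) (σ : Equiv.Perm (Fin n)) :
    (permuteList c h σ).length = n := by simp [permuteList]

lemma profComp_length {C : Type u} {c d : List C} {i j : ℕ} (hi : i < c.length) (hj : j < d.length) :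
    (profComp c d i j).length = c.length + d.length - 2 := by
  simp [profComp]; omega

lemma GP_eq (D : VCycData C V) {l : List C} (h : l.length ≠ 0) : GP D l = D.P l := if_neg h
lemma GP_eq_top (D : VCycData C V) {l : List C} (h : l.length = 0) : GP D l = ⊤_ V := if_pos h

lemma GData_dag (D : VCycData C V) : (GData D).dag = D.dag := rfl

lemma GData_P (D : VCycData C V) : (GData D).P = GP D := rfl

lemma GData_act (D : VCycData C V) {c : List C} {n : ℕ} (h : c.length = n)
    (σ : Equiv.Perm (Fin n)) (hc : c.length ≠ 0) :
    (GData D).act h σ = eqToHom (GP_eq D hc) ≫ D.act h σ ≫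
      eqToHom (GP_eq D (by rw [permuteList_length c h σ]; omega)).symm := by
  simp only [GData]
  rw [dif_neg hc]

lemma GData_comp (D : VCycData C V) {c d : List C} (i j : ℕ) (hi : i < c.length)
    (hj : j < d.length) (hcol : c.get ⟨i, hi⟩ = D.dag (d.get ⟨j, hj⟩))
    (hres : (profComp c d i j).length ≠ 0) :
    (GData D).comp i j hi hj hcol
      = (eqToHom (GP_eq D (by omega)) ⊗ₘ eqToHom (GP_eq D (by omega))) ≫
        D.comp i j hi hj hcol ≫ eqToHom (GP_eq D hres).symm := by
  simp only [GData]
  rw [dif_neg hres]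

lemma GData_ident (D : VCycData C V) (cc : C) :
    (GData D).ident cc = D.ident cc ≫ eqToHom (GP_eq D (by simp)).symm := rfl

end GChar

section Ax
open CategoryTheory MonoidalCategory Limits
variable {C : Type u} {V : Type v} [Category.{w} V] [MonoidalCategory V] [SymmetricCategory V]
  [Limits.HasTerminal V]

lemma hom_ext_of_eq {X Y T : V} (t : IsTerminal T) (h : Y = T) (f g : X ⟶ Y) : f = g := by
  subst h; exact t.hom_ext f g

lemma tensor_eqToHom {X X' Y Y' : V} (h : X = X') (h' : Y = Y') :
    (eqToHom h ⊗ₘ eqToHom h') = eqToHom (by rw [h, h']) := by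
  subst h; subst h'; simp [tensorHom_id]

lemma braiding_conj {X X' Y Y' : V} (h : X = X') (h' : Y = Y') :
    (β_ X Y).hom = (eqToHom h ⊗ₘ eqToHom h') ≫ (β_ X' Y').hom ≫ eqToHom (by rw [h, h']) := by
  subst h; subst h'; simp [tensorHom_id]

lemma assoc_conj {X X' Y Y' Z Z' : V} (hx : X = X') (hy : Y = Y') (hz : Z = Z') :
    (α_ X Y Z).hom = eqToHom (by rw [hx, hy, hz]) ≫ (α_ X' Y' Z').hom ≫ eqToHom (by rw [hx, hy, hz]) := by
  subst hx; subst hy; subst hz; simp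

lemma rhoInv_conj {X X' : V} (h : X = X') :
    (ρ_ X).inv = eqToHom h ≫ (ρ_ X').inv ≫ eqToHom (by rw [h]) := by
  subst h; simp

lemma whiskerRight_congr {W W' X Y : V} (h : W = W') (f : X ⟶ Y) :
    f ▷ W = eqToHom (by rw [h]) ≫ f ▷ W' ≫ eqToHom (by rw [h]) := by subst h; simp

lemma whiskerLeft_congr {W W' X Y : V} (h : W = W') (f : X ⟶ Y) :
    W ◁ f = eqToHom (by rw [h]) ≫ W' ◁ f ≫ eqToHom (by rw [h]) := by subst h; simp

theorem GMarkl {D : VCycData C V} (hD : IsVCyc D) : IsVMarkl (GData D).toVCycDataNU where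
  act_one := by
    intro c n h hl
    by_cases hc : c.length = 0
    · exact hom_ext_of_eq terminalIsTerminal
        (GP_eq_top D (by rw [permuteList_length]; omega)) _ _
    · rw [GData_act D h 1 hc, hD.markl.act_one h hl]
      simp
  act_mul := by
    intro c n h σ σ' h2 hl
    by_cases hc : c.length = 0
    · exact hom_ext_of_eq terminalIsTerminal
        (GP_eq_top D (by rw [permuteList_length]; omega)) _ _
    · have hp : (permuteList c h σ).length ≠ 0 := by rw [permuteList_length]; omega
      rw [GData_act D h σ hc, GData_act D h2 σ' hp, GData_act D h (σ * σ') hc]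
      have E2 := congrArg (fun m => eqToHom (GP_eq D hc) ≫ m ≫
        eqToHom (GP_eq D (by rw [permuteList_length]; omega : (permuteList (permuteList c h σ) h2 σ').length ≠ 0)).symm)
        (hD.markl.act_mul h σ σ' h2 hl)
      simp only [Category.assoc, eqToHom_trans, eqToHom_trans_assoc, eqToHom_refl,
        Category.id_comp, Category.comp_id] at E2 ⊢
      exact E2
  swap := by
    intro c d i j hi hj hcd hdc hlen hl
    by_cases hres : (profComp c d i j).length = 0
    · exact hom_ext_of_eq terminalIsTerminal
        (GP_eq_top D (by rw [profComp_length hj hi]; rw [profComp_length hi hj] at hres; omega)) _ _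
    · have hres2 : (profComp d c j i).length ≠ 0 := by
        rw [profComp_length hj hi]; rw [profComp_length hi hj] at hres; omega
      have hperm : (permuteList (profComp c d i j) hlen
          ((finRotate (c.length + d.length - 2)) ^ (d.length - 1 - j + i))).length ≠ 0 := by
        rw [permuteList_length]; rw [profComp_length hi hj] at hres; omega
      rw [GData_comp D i j hi hj hcd hres, GData_act D hlen _ hres,
        GData_comp D j i hj hi hdc hres2]
      simp only [GData_P]
      rw [
        braiding_conj (GP_eq D (by omega : c.length ≠ 0)) (GP_eq D (by omega : d.length ≠ 0))]
      have E2 := congrArg (fun m => (eqToHom (GP_eq D (by omega : c.length ≠ 0)) ⊗ₘ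
          eqToHom (GP_eq D (by omega : d.length ≠ 0))) ≫ m ≫ eqToHom (GP_eq D hres2).symm)
        (hD.markl.swap i j hi hj hcd hdc hlen hl)
      simp only [Category.assoc, eqToHom_trans, eqToHom_trans_assoc, eqToHom_refl,
        Category.id_comp, Category.comp_id, tensorHom_id, id_tensorHom, tensor_eqToHom, ← tensorHom_comp_tensorHom] at E2 ⊢
      exact E2
  assoc := by
    intro c d e i j k l hi hj hk hl hkj h1 h2 hb hcol1 ha hcol2 hlist
    by_cases hres : (profComp (profComp c d i j) e (betaN (d.length - 1) j i k) l).length = 0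
    · exact hom_ext_of_eq terminalIsTerminal (GP_eq_top D hres) _ _
    · have hcd : (profComp c d i j).length ≠ 0 := by omega
      have hde : (profComp d e k l).length ≠ 0 := by omega
      have hc : c.length ≠ 0 := by omega
      have hd : d.length ≠ 0 := by omega
      have he : e.length ≠ 0 := by omega
      have hfin2 : (profComp c (profComp d e k l) i (alphaN k (e.length - 1) j)).length ≠ 0 := by
        rw [hlist]; exact hres
      rw [GData_comp D i j hi hj h1 hcd,
        GData_comp D (betaN (d.length - 1) j i k) l hb hl hcol1 hres,
        GData_comp D k l hk hl h2 hde,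
        GData_comp D i (alphaN k (e.length - 1) j) hi ha hcol2 hfin2]
      simp only [GData_P]
      rw [assoc_conj (GP_eq D hc) (GP_eq D hd) (GP_eq D he)]
      simp only [comp_whiskerRight, MonoidalCategory.whiskerLeft_comp, tensor_eqToHom,
        eqToHom_whiskerRight, whiskerLeft_eqToHom, Category.assoc]
      rw [whiskerRight_congr (GP_eq D he) (D.comp i j hi hj h1),
        whiskerLeft_congr (GP_eq D hc) (D.comp k l hk hl h2)]
      have E2 := congrArg (fun m => eqToHom (by rw [GP_eq D hc, GP_eq D hd, GP_eq D he] :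
          (GP D c ⊗ GP D d) ⊗ GP D e = (D.P c ⊗ D.P d) ⊗ D.P e) ≫ m ≫ eqToHom (GP_eq D hres).symm)
        (hD.markl.assoc i j k l hi hj hk hl hkj h1 h2 hb hcol1 ha hcol2 hlist)
      simp only [Category.assoc, eqToHom_trans, eqToHom_trans_assoc, eqToHom_refl,
        Category.id_comp, Category.comp_id, tensorHom_id, id_tensorHom, tensor_eqToHom, ← tensorHom_comp_tensorHom, comp_whiskerRight,
        MonoidalCategory.whiskerLeft_comp, eqToHom_whiskerRight, whiskerLeft_eqToHom] at E2 ⊢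
      exact E2
  equiv := by
    intro c d nc nd h1 h2 σ₁ σ₂ i j σ hσ1 hσ2 hip hjp hcolp hi0 hj0 hcol0 hlen hlist
    have hnc : nc ≠ 0 := by have := i.isLt; omega
    have hnd : nd ≠ 0 := by have := j.isLt; omega
    by_cases hres : (profComp (permuteList c h1 σ₁) (permuteList d h2 σ₂) i.val j.val).length = 0
    · exact hom_ext_of_eq terminalIsTerminal (GP_eq_top D hres) _ _
    · have hc : c.length ≠ 0 := by omega
      have hd : d.length ≠ 0 := by omega
      have hpc : (permuteList c h1 σ₁).length ≠ 0 := by rw [permuteList_length]; omega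
      have hpd : (permuteList d h2 σ₂).length ≠ 0 := by rw [permuteList_length]; omega
      have hres0 : (profComp c d (σ₁ i).val (σ₂ j).val).length ≠ 0 := by
        rw [profComp_length hi0 hj0]
        rw [profComp_length hip hjp, permuteList_length, permuteList_length] at hres
        omega
      rw [GData_act D h1 σ₁ hc, GData_act D h2 σ₂ hd,
        GData_comp D i.val j.val hip hjp hcolp hres,
        GData_comp D (σ₁ i).val (σ₂ j).val hi0 hj0 hcol0 hres0,
        GData_act D hlen σ hres0]
      have E2 := congrArg (fun m => (eqToHom (GP_eq D hc) ⊗ₘ eqToHom (GP_eq D hd)) ≫ m ≫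
          eqToHom (GP_eq D hres).symm)
        (hD.markl.equiv h1 h2 σ₁ σ₂ i j σ hσ1 hσ2 hip hjp hcolp hi0 hj0 hcol0 hlen hlist)
      simp only [Category.assoc, eqToHom_trans, eqToHom_trans_assoc, eqToHom_refl,
        Category.id_comp, Category.comp_id, tensorHom_id, id_tensorHom, tensor_eqToHom, ← tensorHom_comp_tensorHom] at E2 ⊢
      exact E2

theorem GCyc {D : VCycData C V} (hD : IsVCyc D) : IsVCyc (GData D) where
  markl := GMarkl hD
  unit := by
    intro c i hi cc h2 hcol hlist
    have hc : c.length ≠ 0 := by omega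
    have hres : (profComp c [(GData D).dag cc, cc] i 1).length ≠ 0 := by
      rw [profComp_length hi h2]; simp only [List.length_cons, List.length_nil]; omega
    rw [GData_comp D i 1 hi h2 hcol hres]
    simp only [GData_P]
    rw [rhoInv_conj (GP_eq D hc)]
    simp only [MonoidalCategory.whiskerLeft_comp, whiskerLeft_eqToHom, Category.assoc]
    rw [whiskerLeft_congr (GP_eq D hc) (D.ident cc)]
    have E2 := congrArg (fun m => eqToHom (GP_eq D hc) ≫ m ≫ eqToHom (GP_eq D hres).symm)
      (hD.unit i hi cc h2 hcol hlist)
    simp only [Category.assoc, eqToHom_trans, eqToHom_trans_assoc, eqToHom_refl,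
      Category.id_comp, Category.comp_id, tensorHom_id, id_tensorHom, tensor_eqToHom, ← tensorHom_comp_tensorHom,
      MonoidalCategory.whiskerLeft_comp, whiskerLeft_eqToHom, eqToHom_whiskerRight,
      comp_whiskerRight] at E2 ⊢
    exact E2
  tau_ident := by
    intro cc h hl
    have h2 : ([(GData D).dag cc, cc] : List C).length ≠ 0 := by simp
    rw [show (GData D).ident cc = D.ident cc ≫ eqToHom (GP_eq D (by simp)).symm from rfl,
      show (GData D).ident ((GData D).dag cc) = D.ident (D.dag cc) ≫
        eqToHom (GP_eq D (by simp)).symm from rfl,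
      GData_act D h (finRotate 2) h2]
    have E2 := congrArg (fun m => m ≫
      eqToHom (GP_eq D (by rw [permuteList_length]; omega :
        (permuteList [D.dag cc, cc] h (finRotate 2)).length ≠ 0)).symm) (hD.tau_ident cc h hl)
    simp only [Category.assoc, eqToHom_trans, eqToHom_trans_assoc, eqToHom_refl,
      Category.id_comp, Category.comp_id] at E2 ⊢
    exact E2

lemma act_congr (D : VCycDataNU C V) {c c' : List C} (hcc : c = c') {n : ℕ}
    (h : c.length = n) (h' : c'.length = n) (σ : Equiv.Perm (Fin n)) :
    D.act h' σ = eqToHom (congrArg D.P hcc.symm) ≫ D.act h σ ≫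
      eqToHom (show D.P (permuteList c h σ) = D.P (permuteList c' h' σ) by subst hcc; rfl) := by
  subst hcc; simp

lemma comp_congr (D : VCycDataNU C V) {c c' d d' : List C} (hc : c = c') (hd : d = d')
    (i j : ℕ) (hi : i < c.length) (hj : j < d.length)
    (hcol : c.get ⟨i, hi⟩ = D.dag (d.get ⟨j, hj⟩))
    (hi' : i < c'.length) (hj' : j < d'.length)
    (hcol' : c'.get ⟨i, hi'⟩ = D.dag (d'.get ⟨j, hj'⟩)) :
    D.comp i j hi' hj' hcol' = (eqToHom (congrArg D.P hc.symm) ⊗ₘ eqToHom (congrArg D.P hd.symm)) ≫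
      D.comp i j hi hj hcol ≫
      eqToHom (show D.P (profComp c d i j) = D.P (profComp c' d' i j) by subst hc; subst hd; rfl) := by
  subst hc; subst hd; simp [tensorHom_id]

lemma f_congr {C C' : Type u} {A : VCycData C V} {B : VCycData C' V} (φ : VCycHom A B)
    {l l' : List C} (h : l = l') :
    φ.f l' = eqToHom (congrArg A.P h.symm) ≫ φ.f l ≫
      eqToHom (show B.P (l.map φ.cf) = B.P (l'.map φ.cf) by subst h; rfl) := by
  subst h; simp

lemma permuteList_map' {C C' : Type u} (φ : C → C') (c : List C) {n : ℕ} (h : c.length = n)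
    (h' : (c.map φ).length = n) (σ : Equiv.Perm (Fin n)) :
    permuteList (c.map φ) h' σ = (permuteList c h σ).map φ := by
  simp only [permuteList, List.map_ofFn]
  congr 1
  funext k
  simp [List.getElem_map]

lemma profComp_map' {C C' : Type u} (φ : C → C') (c d : List C) (i j : ℕ) :
    profComp (c.map φ) (d.map φ) i j = (profComp c d i j).map φ := by
  simp [profComp]

/-- The unit `η : P ⟶ GP`. -/
noncomputable def etaHom (D : VCycData C V) : VCycHom D (GData D) where
  cf := id
  cf_dag := fun _ => rfl
  f := fun l =>
    if h : l.length = 0 then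
      Limits.terminal.from (D.P l) ≫
        eqToHom (GP_eq_top D (by simpa using h) : GP D (l.map id) = ⊤_ V).symm
    else eqToHom (show D.P l = GP D (l.map id) by rw [List.map_id]; exact (GP_eq D h).symm)
  compat_act := by
    intro l n h h' σ hl
    by_cases hne : l.length = 0
    · exact hom_ext_of_eq terminalIsTerminal
        (GP_eq_top D (by rw [List.length_map, permuteList_length]; omega)) _ _
    · have hp : (permuteList l h σ).length ≠ 0 := by rw [permuteList_length]; omega
      have hm : (l.map id).length ≠ 0 := by simpa using hne
      try dsimp only
      rw [dif_neg hne, dif_neg hp, dif_neg hm,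
        act_congr D.toVCycDataNU (List.map_id l).symm h h' σ]
      simp [eqToHom_trans, eqToHom_trans_assoc]
  compat_ident := by
    intro cc hl
    try dsimp only
    simp only [id_eq]
    try rw [dif_neg (show ¬([D.dag cc, cc] : List C).length = 0 by simp)]
    simp [eqToHom_trans]
  compat_comp := by
    intro c d i j hi hj hcol hi' hj' hcol' hl
    by_cases hres : (profComp c d i j).length = 0
    · exact hom_ext_of_eq terminalIsTerminal
        (GP_eq_top D (by rw [List.length_map]; exact hres)) _ _
    · have hc : c.length ≠ 0 := by omega
      have hd : d.length ≠ 0 := by omega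
      have hres' : (profComp (c.map id) (d.map id) i j).length ≠ 0 := by
        rw [hl, List.length_map]; exact hres
      try dsimp only
      rw [dif_neg hc, dif_neg hd, dif_neg hres,
        dif_neg hres',
        comp_congr D.toVCycDataNU (List.map_id c).symm (List.map_id d).symm i j hi hj hcol
          hi' hj' hcol']
      simp only [Category.assoc, eqToHom_trans, eqToHom_trans_assoc, eqToHom_refl,
        Category.id_comp, Category.comp_id, tensorHom_id, id_tensorHom, tensor_eqToHom,
        ← tensorHom_comp_tensorHom, eqToHom_whiskerRight, whiskerLeft_eqToHom]

/-- The counit-side factorization `g : GP ⟶ Q` for positive `Q`. -/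
noncomputable def gHom (D : VCycData C V) {C'' : Type u} (Q : VCycData C'' V)
    (tQ : Limits.IsTerminal (Q.P ([] : List C''))) (k : VCycHom D Q) :
    VCycHom (GData D) Q where
  cf := k.cf
  cf_dag := k.cf_dag
  f := fun l =>
    if h : l.length = 0 then
      tQ.from (GP D l) ≫ eqToHom (congrArg Q.P
        (show ([] : List C'') = l.map k.cf by rw [List.length_eq_zero_iff.mp h]; rfl))
    else eqToHom (GP_eq D h) ≫ k.f l
  compat_act := by
    intro l n h h' σ hl
    by_cases hne : l.length = 0
    · exact hom_ext_of_eq tQ (congrArg Q.P (List.length_eq_zero_iff.mp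
        (by rw [List.length_map, permuteList_length]; omega))) _ _
    · have hp : (permuteList l h σ).length ≠ 0 := by rw [permuteList_length]; omega
      have hl'' : permuteList (l.map k.cf) (by rw [List.length_map]; exact h) σ
          = (permuteList l h σ).map k.cf :=
        permuteList_map' k.cf l h _ σ
      try dsimp only
      simp only [dif_neg hne, dif_neg hp]
      have E2 := congrArg (fun m => eqToHom (GP_eq D hne) ≫ m)
        (k.compat_act l n h (by rw [List.length_map]; exact h) σ hl'')
      simp only [Category.assoc, eqToHom_trans, eqToHom_trans_assoc, eqToHom_refl,
        Category.id_comp, Category.comp_id] at E2 ⊢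
      exact E2
  compat_ident := by
    intro cc hl
    dsimp only
    rw [dif_neg (show ¬([D.dag cc, cc] : List C).length = 0 by simp)]
    have E2 := k.compat_ident cc (by simpa using hl)
    simp only [Category.assoc, eqToHom_trans, eqToHom_trans_assoc, eqToHom_refl,
      Category.id_comp, Category.comp_id] at E2 ⊢
    rw [E2]
  compat_comp := by
    intro c d i j hi hj hcol hi' hj' hcol' hl
    by_cases hres : (profComp c d i j).length = 0
    · exact hom_ext_of_eq tQ (congrArg Q.P (List.length_eq_zero_iff.mp
        (by rw [List.length_map]; exact hres))) _ _
    · have hc : c.length ≠ 0 := by omega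
      have hd : d.length ≠ 0 := by omega
      have hl'' : profComp (c.map k.cf) (d.map k.cf) i j = (profComp c d i j).map k.cf :=
        profComp_map' k.cf c d i j
      try dsimp only
      try dsimp only
      simp only [dif_neg hc, dif_neg hd, dif_neg hres]
      have E2 := congrArg (fun m =>
        (eqToHom (GP_eq D hc) ⊗ₘ eqToHom (GP_eq D hd)) ≫ m)
        (k.compat_comp i j hi hj hcol (by rw [List.length_map]; exact hi)
          (by rw [List.length_map]; exact hj) (by simp only [List.get_eq_getElem, List.getElem_map] at hcol ⊢; rw [hcol]; exact k.cf_dag _)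
          hl'')
      simp only [Category.assoc, eqToHom_trans, eqToHom_trans_assoc, eqToHom_refl,
        Category.id_comp, Category.comp_id, tensorHom_id, id_tensorHom, tensor_eqToHom,
        ← tensorHom_comp_tensorHom, eqToHom_whiskerRight, whiskerLeft_eqToHom] at E2 ⊢
      exact E2

lemma VCycHom.ext' {C C' : Type u} {A : VCycData C V} {B : VCycData C' V}
    (g g' : VCycHom A B) (h1 : g.cf = g'.cf)
    (h2 : ∀ l : List C, g.f l ≫
      eqToHom (show B.P (l.map g.cf) = B.P (l.map g'.cf) by rw [h1]) = g'.f l) : g = g' := by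
  obtain ⟨cf, cfd, f, c1, c2, c3⟩ := g
  obtain ⟨cf', cfd', f', c1', c2', c3'⟩ := g'
  dsimp at h1
  subst h1
  simp only [eqToHom_refl, Category.comp_id] at h2
  have : f = f' := funext h2
  subst this
  rfl
end Ax

/-- the full subcategory of positive cyclic operads is reflective in the
category of cyclic operads: for every cyclic operad `P`, the positive cyclic operad `GP`
(same colors, `GP(c₀,…,c_n) = P(c₀,…,c_n)` for `n ≥ 0`, `GP() = *`) receives a unit map
`η : P → GP` which is the identity on colors, and composition with `η` induces a
bijection between morphisms `GP → Q` and morphisms `P → Q` for every positive cyclic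
operad `Q`; i.e. `G` is left adjoint to the inclusion of positive cyclic operads. -/
theorem positive_reflective {C : Type u} {V : Type v} [Category.{w} V]
    [MonoidalCategory V] [SymmetricCategory V] [MonoidalClosed V] [Limits.HasTerminal V]
    (D : VCycData C V) (hD : IsVCyc D) :
    IsVCyc (GData D) ∧ IsPositive (GData D) ∧
    ∃ η : VCycHom D (GData D), η.cf = id ∧
      ∀ (C'' : Type u) (Q : VCycData C'' V), IsVCyc Q → IsPositive Q →
        ∀ k : VCycHom D Q, ∃! g : VCycHom (GData D) Q, CompEq g η k := by
  refine ⟨GCyc hD, ⟨Limits.IsTerminal.ofIso Limits.terminalIsTerminal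
    (eqToIso (GP_eq_top D (l := []) rfl)).symm⟩, etaHom D, rfl, ?_⟩
  intro C'' Q hQ hQpos k
  obtain ⟨tQ⟩ := hQpos
  refine ⟨gHom D Q tQ k, ⟨fun x => rfl, ?_⟩, ?_⟩
  · intro l hl
    by_cases hne : l.length = 0
    · refine hom_ext_of_eq tQ (congrArg Q.P ?_) _ _
      rw [List.length_eq_zero_iff.mp hne]; rfl
    · have hm : (l.map id).length ≠ 0 := by simpa using hne
      dsimp only [etaHom, gHom]
      rw [dif_neg hne, dif_neg hm, f_congr k (List.map_id l).symm]
      simp [eqToHom_trans, eqToHom_trans_assoc]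
  · intro g' hg'
    have h1 : g'.cf = k.cf := funext fun x => hg'.1 x
    refine VCycHom.ext' g' (gHom D Q tQ k) h1 ?_
    intro l
    by_cases hne : l.length = 0
    · refine hom_ext_of_eq tQ (congrArg Q.P ?_) _ _
      rw [List.length_eq_zero_iff.mp hne]; rfl
    · have hf := hg'.2 l (by rw [show (etaHom D).cf = id from rfl, List.map_id, h1])
      dsimp only [etaHom] at hf
      rw [dif_neg hne, f_congr g' (List.map_id l).symm] at hf
      simp only [Category.assoc, eqToHom_trans, eqToHom_trans_assoc, eqToHom_refl,
        Category.id_comp, Category.comp_id] at hf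
      dsimp only [gHom]
      rw [dif_neg hne, ← hf]
      simp only [eqToHom_trans, eqToHom_trans_assoc, eqToHom_refl, Category.id_comp]
      erw [eqToHom_trans]
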